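/- Bernoulli difference tail bound: let z_1,…,z_n ~ Bern(p) and w_1,…,w_n ~ Bern(q) be independent with p > q. Then for any ξ ∈ ℝ, ℙ{ Σ_{i=1}^n (z_i − w_i) ≤ nξ } ≤ exp( −n[ (√p − √q)² − (ξ/2)·log( p(1−q) / (q(1−p)) ) ] ). -/

import Mathlib

private lemma sum_fun_prod_bool (n : ℕ) (G : Bool → ℝ) :
    ∑ f : Fin n → Bool, ∏ i, G (f i) = (∑ b : Bool, G b) ^ n := by
  rw [← Fintype.prod_sum]; simp

open Classical in
/-- Tail bound for the difference of sums of independent Bernoulli random variables.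
The probability is expressed as an explicit sum over the finite sample space of the
i.i.d. product weights. -/
theorem stmt16 (n : ℕ) (p q : ℝ) (hq0 : 0 < q) (hqp : q < p) (hp1 : p < 1) (ξ : ℝ) :
    (∑ zw : (Fin n → Bool) × (Fin n → Bool),
        if (∑ i, ((if zw.1 i then (1 : ℝ) else 0) - (if zw.2 i then (1 : ℝ) else 0)))
            ≤ (n : ℝ) * ξ then
          (∏ i, if zw.1 i then p else 1 - p) * (∏ i, if zw.2 i then q else 1 - q)
        else 0)
      ≤ Real.exp (-(n : ℝ) *
          ((Real.sqrt p - Real.sqrt q) ^ 2 -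
            ξ / 2 * Real.log (p * (1 - q) / (q * (1 - p))))) := by
  have hp0 : 0 < p := hq0.trans hqp
  have hq1 : q < 1 := hqp.trans hp1
  have hp1' : 0 < 1 - p := by linarith
  have hq1' : 0 < 1 - q := by linarith
  set L : ℝ := Real.log (p * (1 - q) / (q * (1 - p))) / 2 with hL
  set s : ℝ := Real.sqrt (p * (1 - q)) with hs
  set t : ℝ := Real.sqrt (q * (1 - p)) with ht
  have hspos : 0 < s := Real.sqrt_pos.2 (by positivity)
  have htpos : 0 < t := Real.sqrt_pos.2 (by positivity)
  have hs2 : s ^ 2 = p * (1 - q) := Real.sq_sqrt (by positivity)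
  have ht2 : t ^ 2 = q * (1 - p) := Real.sq_sqrt (by positivity)
  have hlogR : Real.log (p * (1 - q) / (q * (1 - p))) = 2 * Real.log s - 2 * Real.log t := by
    rw [Real.log_div (by positivity) (by positivity), ← hs2, ← ht2,
      Real.log_pow, Real.log_pow]
    push_cast; ring
  have hexpL : Real.exp L = s / t := by
    rw [hL, hlogR]
    have : (2 * Real.log s - 2 * Real.log t) / 2 = Real.log s - Real.log t := by ring
    rw [this, Real.exp_sub, Real.exp_log hspos, Real.exp_log htpos]
  have hexpnL : Real.exp (-L) = t / s := by
    rw [Real.exp_neg, hexpL]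
    field_simp
  have hLnn : 0 ≤ L := by
    rw [hL]
    have h1 : (1 : ℝ) ≤ p * (1 - q) / (q * (1 - p)) := by
      rw [le_div_iff₀ (by positivity)]
      nlinarith
    have := Real.log_nonneg h1
    linarith
  -- per-state weight
  set W : (Fin n → Bool) × (Fin n → Bool) → ℝ := fun zw =>
    (∏ i, if zw.1 i then p else 1 - p) * (∏ i, if zw.2 i then q else 1 - q) with hW
  have hWnn : ∀ zw, 0 ≤ W zw := by
    intro zw
    apply mul_nonneg <;> apply Finset.prod_nonneg <;> intro i _ <;> split <;> positivity
  set f : (Fin n → Bool) × (Fin n → Bool) → ℝ := fun zw =>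
    ∑ i, ((if zw.1 i then (1 : ℝ) else 0) - (if zw.2 i then (1 : ℝ) else 0)) with hf
  -- step 1: Chernoff-type pointwise bound
  have step1 : (∑ zw : (Fin n → Bool) × (Fin n → Bool),
        if f zw ≤ (n : ℝ) * ξ then W zw else 0)
      ≤ ∑ zw : (Fin n → Bool) × (Fin n → Bool),
        W zw * Real.exp (L * ((n : ℝ) * ξ - f zw)) := by
    apply Finset.sum_le_sum
    intro zw _
    split_ifs with h
    · have h1 : (1 : ℝ) ≤ Real.exp (L * ((n : ℝ) * ξ - f zw)) := by
        rw [Real.one_le_exp_iff]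
        have : 0 ≤ (n : ℝ) * ξ - f zw := by linarith
        positivity
      calc W zw = W zw * 1 := (mul_one _).symm
        _ ≤ W zw * Real.exp (L * ((n : ℝ) * ξ - f zw)) :=
            mul_le_mul_of_nonneg_left h1 (hWnn zw)
    · positivity
  -- step 2: factorize the moment generating sum
  set gP : Bool → ℝ := fun b => (if b then p else 1 - p) * Real.exp (-(L * (if b then 1 else 0)))
    with hgP
  set gQ : Bool → ℝ := fun b => (if b then q else 1 - q) * Real.exp (L * (if b then 1 else 0))
    with hgQ
  have step2 : (∑ zw : (Fin n → Bool) × (Fin n → Bool),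
        W zw * Real.exp (L * ((n : ℝ) * ξ - f zw)))
      = Real.exp (L * n * ξ) *
        ((∑ b : Bool, gP b) ^ n * (∑ b : Bool, gQ b) ^ n) := by
    have key : ∀ zw : (Fin n → Bool) × (Fin n → Bool),
        W zw * Real.exp (L * ((n : ℝ) * ξ - f zw))
          = Real.exp (L * n * ξ) *
            ((∏ i, gP (zw.1 i)) * (∏ i, gQ (zw.2 i))) := by
      intro zw
      have hfe : Real.exp (L * ((n : ℝ) * ξ - f zw))
          = Real.exp (L * n * ξ) *
            ((∏ i, Real.exp (-(L * (if zw.1 i then (1:ℝ) else 0)))) *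
             (∏ i, Real.exp (L * (if zw.2 i then (1:ℝ) else 0)))) := by
        rw [← Real.exp_sum, ← Real.exp_sum, ← Real.exp_add, ← Real.exp_add]
        congr 1
        rw [hf]
        simp only [Finset.sum_sub_distrib, Finset.sum_neg_distrib, ← Finset.mul_sum]
        ring
      rw [hfe, hW]
      simp only [hgP, hgQ, Finset.prod_mul_distrib]
      ring
    rw [Finset.sum_congr rfl (fun zw _ => key zw)]
    rw [← Finset.mul_sum]
    congr 1
    rw [Fintype.sum_prod_type, ← sum_fun_prod_bool n gP, ← sum_fun_prod_bool n gQ,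
      Finset.sum_mul_sum]
  -- evaluate the Bool sums
  have hsumP : (∑ b : Bool, gP b) = p * (t / s) + (1 - p) := by
    simp [hgP, hexpnL]
  have hsumQ : (∑ b : Bool, gQ b) = q * (s / t) + (1 - q) := by
    simp [hgQ, hexpL]
  -- algebra: identify product with (√(pq)+√((1-p)(1-q)))²
  set u : ℝ := Real.sqrt p with hu
  set v : ℝ := Real.sqrt q with hv
  set a : ℝ := Real.sqrt (1 - p) with ha
  set b : ℝ := Real.sqrt (1 - q) with hb
  have hu2 : u ^ 2 = p := Real.sq_sqrt hp0.le
  have hv2 : v ^ 2 = q := Real.sq_sqrt hq0.le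
  have ha2 : a ^ 2 = 1 - p := Real.sq_sqrt hp1'.le
  have hb2 : b ^ 2 = 1 - q := Real.sq_sqrt hq1'.le
  have hupos : 0 < u := Real.sqrt_pos.2 hp0
  have hvpos : 0 < v := Real.sqrt_pos.2 hq0
  have hapos : 0 < a := Real.sqrt_pos.2 hp1'
  have hbpos : 0 < b := Real.sqrt_pos.2 hq1'
  have hsub : s = u * b := by rw [hs, hu, hb, Real.sqrt_mul hp0.le]
  have htva : t = v * a := by rw [ht, hv, ha, Real.sqrt_mul hq0.le]
  have hA : (p * (t / s) + (1 - p)) * (q * (s / t) + (1 - q)) = (u * v + a * b) ^ 2 := by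
    have h1 : p * (t / s) = v * a * (u / b) := by
      rw [htva, hsub, ← hu2]
      field_simp
    have h2 : q * (s / t) = u * b * (v / a) := by
      rw [hsub, htva, ← hv2]
      field_simp
    rw [h1, h2, ← ha2, ← hb2]
    field_simp
  -- Hellinger bound: u*v + a*b ≤ exp(-(u-v)^2/2)
  have hsum2 : u ^ 2 + v ^ 2 + a ^ 2 + b ^ 2 = 2 := by
    rw [hu2, hv2, ha2, hb2]; ring
  have h2ab : 2 * (a * b) ≤ a ^ 2 + b ^ 2 := by linarith [two_mul_le_add_sq a b]
  have hexpd : (u - v) ^ 2 = u ^ 2 + v ^ 2 - 2 * (u * v) := by ring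
  have hle1 : u * v + a * b ≤ 1 - (u - v) ^ 2 / 2 := by linarith [h2ab, hsum2, hexpd]
  have hexpb : u * v + a * b ≤ Real.exp (-((u - v) ^ 2 / 2)) := by
    have := Real.add_one_le_exp (-((u - v) ^ 2 / 2))
    linarith
  have hABnn : 0 ≤ u * v + a * b := by positivity
  have hA2 : (u * v + a * b) ^ 2 ≤ Real.exp (-((u - v) ^ 2)) := by
    calc (u * v + a * b) ^ 2 ≤ Real.exp (-((u - v) ^ 2 / 2)) ^ 2 := by
          apply pow_le_pow_left₀ hABnn hexpb
      _ = Real.exp (-((u - v) ^ 2)) := by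
          rw [← Real.exp_nat_mul]
          congr 1; ring
  -- conclude
  calc (∑ zw : (Fin n → Bool) × (Fin n → Bool),
        if f zw ≤ (n : ℝ) * ξ then W zw else 0)
      ≤ ∑ zw : (Fin n → Bool) × (Fin n → Bool),
          W zw * Real.exp (L * ((n : ℝ) * ξ - f zw)) := step1
    _ = Real.exp (L * n * ξ) * ((∑ b : Bool, gP b) ^ n * (∑ b : Bool, gQ b) ^ n) := step2
    _ = Real.exp (L * n * ξ) * ((u * v + a * b) ^ 2) ^ n := by
        rw [hsumP, hsumQ, ← mul_pow, hA]
    _ ≤ Real.exp (L * n * ξ) * (Real.exp (-((u - v) ^ 2))) ^ n := by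
        apply mul_le_mul_of_nonneg_left _ (Real.exp_nonneg _)
        exact pow_le_pow_left₀ (by positivity) hA2 n
    _ = Real.exp (-(n : ℝ) * ((u - v) ^ 2 - ξ / 2 * Real.log (p * (1 - q) / (q * (1 - p))))) := by
        rw [← Real.exp_nat_mul, ← Real.exp_add]
        congr 1
        rw [hL]
        ring
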